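/- Let H be a hypergraph, ψ an embedding of the k-clique C_k into H, and (T, χ) a tree decomposition of H. Then there exists a node t of T such that ψ(i) ∩ χ(t) ≠ ∅ for every i = 1, …, k. -/

import Mathlib

open Finset

structure Hypergraph' (V : Type*) [DecidableEq V] [Fintype V] where
  edges : Finset (Finset V)

namespace Hypergraph'

variable {V : Type*} [DecidableEq V] [Fintype V]

/-- Two vertex sets touch in `H`: they intersect, or some hyperedge meets both. -/
def touch (H : Hypergraph' V) (S T : Finset V) : Prop :=
  (S ∩ T).Nonempty ∨ ∃ e ∈ H.edges, (e ∩ S).Nonempty ∧ (e ∩ T).Nonempty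

/-- `S` induces a connected subhypergraph of `H`. -/
def connSet (H : Hypergraph' V) (S : Finset V) : Prop :=
  ∀ a ∈ S, ∀ b ∈ S,
    Relation.ReflTransGen (fun x y => x ∈ S ∧ y ∈ S ∧ ∃ e ∈ H.edges, x ∈ e ∧ y ∈ e) a b

/-- An embedding of the `k`-clique into the hypergraph `H`. -/
def IsCliqueEmb (H : Hypergraph' V) (k : ℕ) (ψ : Fin k → Finset V) : Prop :=
  (∀ i, (ψ i).Nonempty) ∧ (∀ i, H.connSet (ψ i)) ∧
    ∀ i j : Fin k, i ≠ j → H.touch (ψ i) (ψ j)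

/-- The weak edge depth of an embedding: the max over hyperedges `e` of the number
of clique vertices whose image meets `e`. -/
def wedOf (H : Hypergraph' V) {k : ℕ} (ψ : Fin k → Finset V) : ℕ :=
  H.edges.sup fun e => (Finset.univ.filter fun i : Fin k => ((ψ i) ∩ e).Nonempty).card

/-- `wed (C_k ↦ H)`: the minimum weak edge depth over embeddings of the `k`-clique. -/
noncomputable def wed (H : Hypergraph' V) (k : ℕ) : ℕ :=
  sInf {w | ∃ ψ : Fin k → Finset V, H.IsCliqueEmb k ψ ∧ H.wedOf ψ ≤ w}

end Hypergraph'

/-- A tree decomposition of a hypergraph. -/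
structure IsTreeDecomp {V : Type*} [DecidableEq V] [Fintype V] {ι : Type*}
    (H : Hypergraph' V) (T : SimpleGraph ι) (χ : ι → Finset V) : Prop where
  tree : T.IsTree
  covers : ∀ e ∈ H.edges, ∃ t, e ⊆ χ t
  conn : ∀ v : V, (T.induce {t | v ∈ χ t}).Connected

section Aux

variable {ι : Type*} {T : SimpleGraph ι}

/-- Reachability inside a set `S` of vertices of `T`. -/
def Reach (T : SimpleGraph ι) (S : Set ι) (a b : ι) : Prop :=
  Relation.ReflTransGen (fun x y => x ∈ S ∧ y ∈ S ∧ T.Adj x y) a b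

lemma Reach.mono' {S S' : Set ι} (h : S ⊆ S') {a b : ι} (hr : Reach T S a b) :
    Reach T S' a b :=
  Relation.ReflTransGen.mono (fun x y (hxy : x ∈ S ∧ y ∈ S ∧ T.Adj x y) =>
    (⟨h hxy.1, h hxy.2.1, hxy.2.2⟩ : x ∈ S' ∧ y ∈ S' ∧ T.Adj x y)) a b hr

/-- `S` is nonempty and connected. -/
def ConnS (T : SimpleGraph ι) (S : Set ι) : Prop :=
  S.Nonempty ∧ ∀ a ∈ S, ∀ b ∈ S, Reach T S a b

lemma walk_of_reach {S : Set ι} {a b : ι} (h : Reach T S a b) (ha : a ∈ S) :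
    ∃ w : T.Walk a b, ∀ x ∈ w.support, x ∈ S := by
  induction h with
  | refl => exact ⟨.nil, by simpa using ha⟩
  | tail _ step ih =>
    obtain ⟨w, hw⟩ := ih
    obtain ⟨h1, h2, hadj⟩ := step
    refine ⟨w.append (SimpleGraph.Walk.cons hadj .nil), ?_⟩
    intro x hx
    rw [SimpleGraph.Walk.support_append] at hx
    rcases List.mem_append.1 hx with h | h
    · exact hw x h
    · simp only [SimpleGraph.Walk.support_cons, SimpleGraph.Walk.support_nil,
        List.tail_cons, List.mem_singleton] at h
      subst h; exact h2

lemma reach_of_induce_walk {S : Set ι} :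
    ∀ {x y : S} (_ : (T.induce S).Walk x y), Reach T S x y
  | _, _, .nil => .refl
  | x, _, @SimpleGraph.Walk.cons _ _ _ y _ h w =>
    Relation.ReflTransGen.head ⟨x.2, y.2, h⟩ (reach_of_induce_walk w)

lemma connS_of_induce {S : Set ι} (h : (T.induce S).Connected) : ConnS T S := by
  refine ⟨?_, ?_⟩
  · obtain ⟨x⟩ := h.nonempty
    exact ⟨x, x.2⟩
  · intro a ha b hb
    obtain ⟨w⟩ := h.preconnected ⟨a, ha⟩ ⟨b, hb⟩
    exact reach_of_induce_walk w

/-- The unique path between two vertices of a tree. -/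
noncomputable def pth (ht : T.IsTree) (a b : ι) : T.Walk a b :=
  (ht.existsUnique_path a b).choose

lemma pth_isPath (ht : T.IsTree) (a b : ι) : (pth ht a b).IsPath :=
  (ht.existsUnique_path a b).choose_spec.1

lemma pth_unique (ht : T.IsTree) {a b : ι} {w : T.Walk a b} (hw : w.IsPath) :
    w = pth ht a b :=
  (ht.existsUnique_path a b).choose_spec.2 _ hw

lemma pth_subset (ht : T.IsTree) {S : Set ι} (hS : ConnS T S) {a b : ι}
    (ha : a ∈ S) (hb : b ∈ S) : ∀ x ∈ (pth ht a b).support, x ∈ S := by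
  classical
  obtain ⟨w, hw⟩ := walk_of_reach (hS.2 a ha b hb) ha
  have heq : w.bypass = pth ht a b := pth_unique ht w.bypass_isPath
  intro x hx
  rw [← heq] at hx
  exact hw x (w.support_bypass_subset hx)

/-- Any connected set `S` has a gate `m` towards the root `r` : for every
`x ∈ S` the unique path from `r` to `x` decomposes through `m`. -/
lemma exists_gate (ht : T.IsTree) (r : ι) {S : Set ι} (hS : ConnS T S) :
    ∃ m ∈ S, ∀ x ∈ S, pth ht r x = (pth ht r m).append (pth ht m x) := by
  classical
  set L : Set ℕ := {n | ∃ x ∈ S, (pth ht r x).length = n} with hLdef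
  have hL : L.Nonempty := by
    obtain ⟨x, hx⟩ := hS.1
    exact ⟨_, x, hx, rfl⟩
  obtain ⟨m, hm, hlen⟩ := Nat.sInf_mem hL
  have hmin : ∀ y ∈ S, (pth ht r m).length ≤ (pth ht r y).length := by
    intro y hy
    rw [hlen]
    exact Nat.sInf_le ⟨y, hy, rfl⟩
  refine ⟨m, hm, fun x hx => ?_⟩
  have hp := pth_isPath ht r m
  have hq := pth_isPath ht m x
  -- supports meet only at m
  have hdisj : ∀ y, y ∈ (pth ht r m).support → y ∈ (pth ht m x).support → y = m := by
    intro y hy1 hy2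
    by_contra hne
    have hyS : y ∈ S := pth_subset ht hS hm hx _ hy2
    have htu : ((pth ht r m).takeUntil y hy1).IsPath := hp.takeUntil hy1
    have heq : (pth ht r m).takeUntil y hy1 = pth ht r y := pth_unique ht htu
    have hspec := congrArg SimpleGraph.Walk.length ((pth ht r m).take_spec hy1)
    rw [SimpleGraph.Walk.length_append] at hspec
    have hdrop : ((pth ht r m).dropUntil y hy1).length ≠ 0 := by
      intro h0
      exact hne (SimpleGraph.Walk.eq_of_length_eq_zero h0)
    have hlt : (pth ht r y).length < (pth ht r m).length := by
      rw [← heq]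
      omega
    exact absurd (hmin y hyS) (not_le.2 hlt)
  have happ : ((pth ht r m).append (pth ht m x)).IsPath := by
    rw [SimpleGraph.Walk.isPath_def, SimpleGraph.Walk.support_append]
    have h1 : (pth ht r m).support.Nodup := (SimpleGraph.Walk.isPath_def _).1 hp
    have h2 : (pth ht m x).support.Nodup := (SimpleGraph.Walk.isPath_def _).1 hq
    have hcons : (pth ht m x).support = m :: (pth ht m x).support.tail :=
      SimpleGraph.Walk.support_eq_cons _
    rw [hcons, List.nodup_cons] at h2
    refine List.Nodup.append h1 h2.2 ?_
    intro y hy1 hy2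
    have : y = m := hdisj y hy1 (List.mem_of_mem_tail hy2)
    subst this
    exact h2.1 hy2
  exact (pth_unique ht happ).symm

/-- Helly property for subtrees of a tree. -/
lemma tree_helly (ht : T.IsTree) {k : ℕ} (s : Fin k → Set ι)
    (hconn : ∀ i, ConnS T (s i)) (hint : ∀ i j, (s i ∩ s j).Nonempty) :
    ∃ t, ∀ i, t ∈ s i := by
  classical
  have hne : Nonempty ι := ht.isConnected.nonempty
  match k with
  | 0 => exact ⟨Classical.arbitrary ι, fun i => i.elim0⟩
  | k + 1 =>
    obtain ⟨r⟩ := hne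
    choose m hmS hmdec using fun i => exists_gate ht r (hconn i)
    obtain ⟨i0, _, hmax⟩ := Finset.exists_max_image Finset.univ
      (fun i => (pth ht r (m i)).length) ⟨0, Finset.mem_univ 0⟩
    refine ⟨m i0, fun j => ?_⟩
    obtain ⟨x, hx⟩ := hint i0 j
    have hxi : x ∈ s i0 := hx.1
    have hxj : x ∈ s j := hx.2
    -- m i0 lies on the path from r to x
    have hmem : m i0 ∈ (pth ht r x).support := by
      rw [hmdec i0 x hxi, SimpleGraph.Walk.support_append]
      exact List.mem_append.2 (Or.inl (SimpleGraph.Walk.end_mem_support _))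
    rw [hmdec j x hxj, SimpleGraph.Walk.support_append] at hmem
    rcases List.mem_append.1 hmem with hcase | hcase
    · -- m i0 on the path from r to m j; by maximality m i0 = m j
      have htu : ((pth ht r (m j)).takeUntil (m i0) hcase).IsPath :=
        (pth_isPath ht r (m j)).takeUntil hcase
      have heq : (pth ht r (m j)).takeUntil (m i0) hcase = pth ht r (m i0) :=
        pth_unique ht htu
      have hspec := congrArg SimpleGraph.Walk.length ((pth ht r (m j)).take_spec hcase)
      rw [SimpleGraph.Walk.length_append, heq] at hspec
      have hge := hmax j (Finset.mem_univ j)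
      have hdrop : ((pth ht r (m j)).dropUntil (m i0) hcase).length = 0 := by omega
      have : m i0 = m j := SimpleGraph.Walk.eq_of_length_eq_zero hdrop
      rw [this]
      exact hmS j
    · exact pth_subset ht (hconn j) (hmS j) hxj _ (List.mem_of_mem_tail hcase)

end Aux

/-- Given an embedding `ψ` of the `k`-clique into `H` and a tree decomposition
`(T, χ)` of `H`, some bag meets every image `ψ i`. -/
theorem exists_bag_meeting_all_images {V : Type*} [DecidableEq V] [Fintype V]
    {ι : Type*} (H : Hypergraph' V) (k : ℕ) (ψ : Fin k → Finset V)
    (hψ : H.IsCliqueEmb k ψ) (T : SimpleGraph ι) (χ : ι → Finset V)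
    (hT : IsTreeDecomp H T χ) :
    ∃ t : ι, ∀ i : Fin k, (ψ i ∩ χ t).Nonempty := by
  classical
  obtain ⟨hne, hconn, htouch⟩ := hψ
  -- the subtree of bags containing a vertex v
  set Vv : V → Set ι := fun v => {t | v ∈ χ t} with hVv
  have hVconn : ∀ v, ConnS T (Vv v) := fun v => connS_of_induce (hT.conn v)
  have hVsub : ∀ i : Fin k, ∀ v ∈ ψ i, Vv v ⊆ {t | (ψ i ∩ χ t).Nonempty} := by
    intro i v hv t ht
    exact ⟨v, Finset.mem_inter.2 ⟨hv, ht⟩⟩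
  -- the set of bags meeting ψ i
  set s : Fin k → Set ι := fun i => {t | (ψ i ∩ χ t).Nonempty} with hs
  have hsconn : ∀ i, ConnS T (s i) := by
    intro i
    obtain ⟨v, hv⟩ := hne i
    obtain ⟨t0, ht0⟩ := (hVconn v).1
    refine ⟨⟨t0, hVsub i v hv ht0⟩, ?_⟩
    rintro a ⟨u, hu⟩ b ⟨w, hw⟩
    rw [Finset.mem_inter] at hu hw
    -- connect through the chain from u to w inside ψ i
    have key : ∀ w' : V, Relation.ReflTransGen
        (fun x y => x ∈ ψ i ∧ y ∈ ψ i ∧ ∃ e ∈ H.edges, x ∈ e ∧ y ∈ e) u w' →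
        ∀ t' ∈ Vv w', Reach T (s i) a t' := by
      intro w' hchain
      induction hchain with
      | refl =>
        intro t' ht'
        exact ((hVconn u).2 a hu.2 t' ht').mono' (hVsub i u hu.1)
      | tail _ step ih =>
        obtain ⟨hy, hz, e, he, hye, hze⟩ := step
        obtain ⟨t0, ht0⟩ := hT.covers e he
        intro t' ht'
        have h1 : Reach T (s i) a t0 := ih t0 (ht0 hye)
        have h2 : Reach T (s i) t0 t' :=
          ((hVconn _).2 t0 (ht0 hze) t' ht').mono' (hVsub i _ hz)
        exact h1.trans h2
    exact key w (hconn i u hu.1 w hw.1) b hw.2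
  have hsint : ∀ i j, (s i ∩ s j).Nonempty := by
    intro i j
    by_cases hij : i = j
    · subst hij
      obtain ⟨t0, ht0⟩ := (hsconn i).1
      exact ⟨t0, ht0, ht0⟩
    · rcases htouch i j hij with ⟨v, hv⟩ | ⟨e, he, ⟨v1, hv1⟩, ⟨v2, hv2⟩⟩
      · rw [Finset.mem_inter] at hv
        obtain ⟨t0, ht0⟩ := (hVconn v).1
        exact ⟨t0, hVsub i v hv.1 ht0, hVsub j v hv.2 ht0⟩
      · obtain ⟨t0, ht0⟩ := hT.covers e he
        rw [Finset.mem_inter] at hv1 hv2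
        exact ⟨t0, ⟨v1, Finset.mem_inter.2 ⟨hv1.2, ht0 hv1.1⟩⟩,
          ⟨v2, Finset.mem_inter.2 ⟨hv2.2, ht0 hv2.1⟩⟩⟩
  obtain ⟨t, ht⟩ := tree_helly hT.tree s hsconn hsint
  exact ⟨t, ht⟩
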